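/- arXiv:2407.15974 — 2 statements merged into one kernel-verified Lean document; each statement's English description precedes it below -/
import Mathlib

section
/- Let $q \ge 1$ and let $X$ be a real Banach space. For every continuous function $v : [0,1] \to X$ there exists a unique polynomial $\tilde v$ of degree at most $q-1$ with coefficients in $X$ such that $\tilde v(1) = v(1)$ and $\int_0^1 (v(t) - \tilde v(t)) t^j \, dt = 0$ for $j = 0,\dots,q-2$. -/
open MeasureTheory intervalIntegral Finset

noncomputable def Mq (q : ℕ) : Matrix (Fin q) (Fin q) ℝ :=
  Matrix.of fun i k => if i.val = 0 then 1 else ((i.val + k.val : ℕ) : ℝ)⁻¹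

lemma fact_lemma (c' r : ℕ → ℝ) (hr : ∀ k, r k = -∑ l ∈ Finset.range (k+1), c' l)
    (m : ℕ) (t : ℝ) :
    ∑ l ∈ Finset.range (m+1), c' l * t ^ l
      = (t - 1) * ∑ k ∈ Finset.range m, r k * t ^ k - r m * t ^ m := by
  induction m with
  | zero => simp [hr 0]
  | succ m ih =>
      have hstep : r (m+1) = r m - c' (m+1) := by
        rw [hr (m+1), hr m, Finset.sum_range_succ]; ring
      rw [Finset.sum_range_succ, ih, Finset.sum_range_succ, hstep]
      ring

lemma Mq_ker (q : ℕ) (hq : 1 ≤ q) (c : Fin q → ℝ) (hc : (Mq q).mulVec c = 0) :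
    c = 0 := by
  set c' : ℕ → ℝ := fun l => if h : l < q then c ⟨l, h⟩ else 0 with hc'
  set r : ℕ → ℝ := fun k => -∑ l ∈ Finset.range (k+1), c' l with hrdef
  have hr : ∀ k, r k = -∑ l ∈ Finset.range (k+1), c' l := fun k => rfl
  -- row 0
  have h1 : ∑ l ∈ Finset.range q, c' l = 0 := by
    have h0 := congrFun hc ⟨0, hq⟩
    simp only [Matrix.mulVec, dotProduct, Mq, Matrix.of_apply, Pi.zero_apply] at h0
    rw [← Fin.sum_univ_eq_sum_range]
    simpa [c'] using h0
  -- moment rows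
  have h2 : ∀ j : ℕ, j + 2 ≤ q →
      ∑ k ∈ Finset.range q, ((j + k + 1 : ℕ) : ℝ)⁻¹ * c' k = 0 := by
    intro j hj
    have hjq : j + 1 < q := by omega
    have h0 := congrFun hc ⟨j+1, hjq⟩
    simp only [Matrix.mulVec, dotProduct, Mq, Matrix.of_apply, Pi.zero_apply] at h0
    rw [← Fin.sum_univ_eq_sum_range]
    have : ∀ k : Fin q, ((j + k.val + 1 : ℕ) : ℝ)⁻¹ * c' k.val
        = (if (j+1) = 0 then 1 else ((j + 1 + k.val : ℕ) : ℝ)⁻¹) * c k := by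
      intro k
      have : (j + k.val + 1 : ℕ) = (j + 1 + k.val : ℕ) := by omega
      simp [c', this]
    rw [Finset.sum_congr rfl fun k _ => this k]
    simpa using h0
  set T : ℝ → ℝ := fun t => ∑ k ∈ Finset.range (q-1), r k * t ^ k with hT
  have hTc : Continuous T := by
    apply continuous_finset_sum
    exact fun k _ => (continuous_const.mul (continuous_pow k))
  have hrq : r (q-1) = 0 := by
    have : q - 1 + 1 = q := by omega
    rw [hr, this, h1, neg_zero]
  have hPt : ∀ t : ℝ, ∑ l ∈ Finset.range q, c' l * t ^ l = (t - 1) * T t := by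
    intro t
    have hq1 : q - 1 + 1 = q := by omega
    have := fact_lemma c' r hr (q-1) t
    rw [hq1] at this
    rw [this, hrq]
    ring
  have hInt : ∀ j : ℕ, j + 2 ≤ q →
      (∫ t in (0:ℝ)..1, t ^ j * ((t - 1) * T t)) = 0 := by
    intro j hj
    have : (∫ t in (0:ℝ)..1, t ^ j * ((t - 1) * T t))
        = ∫ t in (0:ℝ)..1, ∑ l ∈ Finset.range q, c' l * t ^ (j + l) := by
      apply intervalIntegral.integral_congr
      intro t _
      show t ^ j * ((t - 1) * T t) = ∑ l ∈ Finset.range q, c' l * t ^ (j + l)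
      rw [← hPt t, Finset.mul_sum]
      apply Finset.sum_congr rfl
      intro l _
      rw [pow_add]; ring
    rw [this, intervalIntegral.integral_finset_sum]
    · have : ∀ l ∈ Finset.range q, (∫ t in (0:ℝ)..1, c' l * t ^ (j + l))
          = ((j + l + 1 : ℕ) : ℝ)⁻¹ * c' l := by
        intro l _
        rw [intervalIntegral.integral_const_mul, integral_pow]
        have h1 : ((1:ℝ) ^ (j + l + 1) - 0 ^ (j + l + 1)) = 1 := by
          simp
        push_cast
        rw [h1]
        ring
      rw [Finset.sum_congr rfl this]
      exact h2 j hj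
    · intro l _
      exact (continuous_const.mul (continuous_pow (j + l))).intervalIntegrable 0 1
  set g : ℝ → ℝ := fun t => (1 - t) * (T t) ^ 2 with hgdef
  have hgc : Continuous g := by
    exact (continuous_const.sub continuous_id).mul (hTc.pow 2)
  have hgint : (∫ t in (0:ℝ)..1, g t) = 0 := by
    have hgsum : ∀ t : ℝ, g t
        = ∑ k ∈ Finset.range (q-1), (-(r k)) * (t ^ k * ((t - 1) * T t)) := by
      intro t
      have e1 : ∑ k ∈ Finset.range (q-1), (-(r k)) * (t ^ k * ((t - 1) * T t))
          = (∑ k ∈ Finset.range (q-1), r k * t ^ k) * (-((t - 1) * T t)) := by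
        rw [Finset.sum_mul]
        apply Finset.sum_congr rfl
        intro k _
        ring
      rw [e1]
      show (1 - t) * (T t) ^ 2 = T t * -((t - 1) * T t)
      ring
    rw [intervalIntegral.integral_congr (fun t _ => hgsum t),
      intervalIntegral.integral_finset_sum]
    · rw [Finset.sum_congr rfl (fun k _ => intervalIntegral.integral_const_mul _ _)]
      apply Finset.sum_eq_zero
      intro k hk
      have hk' := Finset.mem_range.mp hk
      rw [hInt k (by omega)]
      ring
    · intro k _
      exact (continuous_const.mul ((continuous_pow k).mul
        ((continuous_id.sub continuous_const).mul hTc))).intervalIntegrable 0 1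
  have hTzero : ∀ t ∈ Set.Ioo (0:ℝ) 1, T t = 0 := by
    by_contra h
    push_neg at h
    obtain ⟨t₀, ht₀, hTt₀⟩ := h
    have hgpos : 0 < g t₀ := by
      apply mul_pos
      · linarith [ht₀.2]
      · positivity
    have hsup : volume (Function.support g ∩ Set.Ioc 0 1) = 0 := by
      by_contra hs
      have hpos : 0 < ∫ t in (0:ℝ)..1, g t := by
        rw [intervalIntegral.integral_pos_iff_support_of_nonneg_ae' ?_ (hgc.intervalIntegrable 0 1)]
        · exact ⟨by norm_num, pos_iff_ne_zero.mpr hs⟩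
        · rw [Set.uIoc_of_le (by norm_num : (0:ℝ) ≤ 1)]
          filter_upwards [MeasureTheory.ae_restrict_mem measurableSet_Ioc] with x hx
          have : (0:ℝ) ≤ 1 - x := by linarith [hx.2]
          positivity
      rw [hgint] at hpos
      exact lt_irrefl 0 hpos
    have hopen : IsOpen (Function.support g ∩ Set.Ioo 0 1) :=
      (hgc.isOpen_support).inter isOpen_Ioo
    have hne : (Function.support g ∩ Set.Ioo 0 1).Nonempty :=
      ⟨t₀, Function.mem_support.mpr (ne_of_gt hgpos), ht₀⟩
    have := hopen.measure_pos volume hne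
    have hmono : volume (Function.support g ∩ Set.Ioo 0 1)
        ≤ volume (Function.support g ∩ Set.Ioc 0 1) :=
      measure_mono (Set.inter_subset_inter_right _ Set.Ioo_subset_Ioc_self)
    rw [hsup] at hmono
    exact absurd (le_antisymm hmono zero_le) (ne_of_gt this)
  -- polynomial argument: all r k = 0 for k < q - 1
  have hr0 : ∀ k, k < q - 1 → r k = 0 := by
    intro k hk
    set p : Polynomial ℝ := ∑ l ∈ Finset.range (q-1), Polynomial.C (r l) * Polynomial.X ^ l with hp
    have hev : ∀ t : ℝ, p.eval t = T t := by
      intro t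
      simp [hp, Polynomial.eval_finset_sum, hT]
    have hproots : p = 0 := by
      apply Polynomial.eq_zero_of_infinite_isRoot
      have hsub : Set.Ioo (0:ℝ) 1 ⊆ {x | p.IsRoot x} := by
        intro t ht
        simp only [Set.mem_setOf_eq, Polynomial.IsRoot, hev]
        exact hTzero t ht
      exact (Set.Ioo_infinite (by norm_num)).mono hsub
    have : p.coeff k = r k := by
      simp only [hp, Polynomial.finset_sum_coeff, Polynomial.coeff_C_mul,
        Polynomial.coeff_X_pow]
      rw [Finset.sum_eq_single k]
      · simp
      · intro b _ hb
        simp [Ne.symm hb]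
      · intro hnk
        exact absurd (Finset.mem_range.mpr hk) hnk
    rw [← this, hproots]
    simp
  have hrall : ∀ k, k ≤ q - 1 → r k = 0 := by
    intro k hk
    rcases Nat.lt_or_ge k (q-1) with h | h
    · exact hr0 k h
    · have : k = q - 1 := le_antisymm hk h
      rw [this]; exact hrq
  have hcz : ∀ k, k < q → c' k = 0 := by
    intro k hk
    rcases k with _ | m
    · have := hrall 0 (by omega)
      rw [hr] at this
      simpa using this
    · have h1 := hrall m (by omega)
      have h2 := hrall (m+1) (by omega)
      rw [hr] at h1 h2
      rw [Finset.sum_range_succ] at h2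
      have : c' (m+1) = 0 := by
        have := congrArg Neg.neg h2
        simp at h2 h1 ⊢
        linarith
      exact this
  funext i
  have := hcz i.val i.isLt
  simpa [c'] using this

lemma Mq_inv (q : ℕ) (hq : 1 ≤ q) :
    ∃ N : Matrix (Fin q) (Fin q) ℝ, Mq q * N = 1 ∧ N * Mq q = 1 := by
  have hinj : Function.Injective (Mq q).mulVecLin := by
    rw [← LinearMap.ker_eq_bot, LinearMap.ker_eq_bot']
    intro c hc
    exact Mq_ker q hq c hc
  have hsurj : Function.Surjective (Mq q).mulVecLin :=
    LinearMap.injective_iff_surjective.mp hinj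
  choose x hx using fun b : Fin q => hsurj (Pi.single b 1)
  refine ⟨Matrix.of fun k b => x b k, ?_, ?_⟩
  · ext a b
    have := congrFun (hx b) a
    simp only [Matrix.mulVecLin_apply, Matrix.mulVec, dotProduct] at this
    rw [Matrix.mul_apply]
    simp only [Matrix.of_apply]
    rw [this, Matrix.one_apply, Pi.single_apply]
  · rw [mul_eq_one_comm]
    ext a b
    have := congrFun (hx b) a
    simp only [Matrix.mulVecLin_apply, Matrix.mulVec, dotProduct] at this
    rw [Matrix.mul_apply]
    simp only [Matrix.of_apply]
    rw [this, Matrix.one_apply, Pi.single_apply]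

lemma int_pow_smul {X : Type*} [NormedAddCommGroup X] [NormedSpace ℝ X]
    [CompleteSpace X] (n : ℕ) (x : X) :
    ∫ t in (0:ℝ)..1, t ^ n • x = ((n : ℝ) + 1)⁻¹ • x := by
  rw [intervalIntegral.integral_smul_const, integral_pow]
  norm_num

set_option maxHeartbeats 1000000 in
lemma poly_moment {X : Type*} [NormedAddCommGroup X] [NormedSpace ℝ X]
    [CompleteSpace X] (q : ℕ) (j : ℕ) (w : Fin q → X) :
    ∫ t in (0:ℝ)..1, t ^ j • (∑ k : Fin q, t ^ k.val • w k)
      = ∑ k : Fin q, ((j + k.val + 1 : ℕ) : ℝ)⁻¹ • w k := by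
  have h1 : ∀ t : ℝ, t ^ j • (∑ k : Fin q, t ^ k.val • w k)
      = ∑ k : Fin q, t ^ (j + k.val) • w k := by
    intro t
    rw [Finset.smul_sum]
    exact Finset.sum_congr rfl fun k _ => by rw [smul_smul, ← pow_add]
  have h2 : (∫ t in (0:ℝ)..1, t ^ j • (∑ k : Fin q, t ^ k.val • w k))
      = ∫ t in (0:ℝ)..1, ∑ k : Fin q, t ^ (j + k.val) • w k :=
    intervalIntegral.integral_congr (fun t _ => h1 t)
  have h3 : (∫ t in (0:ℝ)..1, ∑ k : Fin q, t ^ (j + k.val) • w k)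
      = ∑ k : Fin q, ∫ t in (0:ℝ)..1, t ^ (j + k.val) • w k :=
    intervalIntegral.integral_finset_sum
      (fun k _ => ((continuous_pow (j + k.val)).smul continuous_const).intervalIntegrable 0 1)
  rw [h2, h3]
  refine Finset.sum_congr rfl fun k _ => ?_
  rw [int_pow_smul]
  push_cast
  norm_num

lemma Mq_row_succ (q j : ℕ) (h : j + 1 < q) (k : Fin q) :
    Mq q ⟨j+1, h⟩ k = ((j + k.val + 1 : ℕ) : ℝ)⁻¹ := by
  have e : j + 1 + k.val = j + k.val + 1 := by omega
  simp only [Mq, Matrix.of_apply]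
  rw [if_neg (by omega), e]

lemma Mq_row_zero (q : ℕ) (h : 0 < q) (k : Fin q) :
    Mq q ⟨0, h⟩ k = 1 := by
  simp [Mq]

theorem stmt5 (q : ℕ) (hq : 1 ≤ q)
    {X : Type*} [NormedAddCommGroup X] [NormedSpace ℝ X] [CompleteSpace X]
    (v : ℝ → X) (hv : ContinuousOn v (Set.Icc 0 1)) :
    ∃! tv : ℝ → X,
      (∃ w : Fin q → X, ∀ t, tv t = ∑ j, t ^ j.val • w j) ∧
      tv 1 = v 1 ∧
      ∀ j : ℕ, j + 2 ≤ q → ∫ t in (0:ℝ)..1, t ^ j • (v t - tv t) = 0 := by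
  obtain ⟨N, hMN, hNM⟩ := Mq_inv q hq
  -- the data vector
  set d : Fin q → X := fun i =>
    if i.val = 0 then v 1 else ∫ t in (0:ℝ)..1, t ^ (i.val - 1) • v t with hd
  set w : Fin q → X := fun k => ∑ i, N k i • d i with hw
  set tv : ℝ → X := fun t => ∑ k : Fin q, t ^ k.val • w k with htv
  have htvc : Continuous tv :=
    continuous_finset_sum _ fun k _ => (continuous_pow k.val).smul continuous_const
  -- generic: applying a row of Mq to coefficients
  have hrow : ∀ (u : Fin q → X) (i : Fin q),
      ∑ k, Mq q i k • (∑ i', N k i' • u i') = u i := by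
    intro u i
    have step1 : ∀ k : Fin q, Mq q i k • (∑ i', N k i' • u i')
        = ∑ i', (Mq q i k * N k i') • u i' := by
      intro k
      rw [Finset.smul_sum]
      exact Finset.sum_congr rfl fun i' _ => (smul_smul _ _ _)
    calc ∑ k, Mq q i k • (∑ i', N k i' • u i')
        = ∑ k, ∑ i', (Mq q i k * N k i') • u i' :=
          Finset.sum_congr rfl fun k _ => step1 k
      _ = ∑ i', ∑ k, (Mq q i k * N k i') • u i' := Finset.sum_comm
      _ = ∑ i', (∑ k, Mq q i k * N k i') • u i' :=
          Finset.sum_congr rfl fun i' _ => (Finset.sum_smul).symm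
      _ = ∑ i', ((Mq q * N) i i') • u i' :=
          Finset.sum_congr rfl fun i' _ => by rw [Matrix.mul_apply]
      _ = u i := by rw [hMN]; simp [Matrix.one_apply]
  have hKey : ∀ i : Fin q, ∑ k, Mq q i k • w k = d i := fun i => hrow d i
  -- value at 1
  have htv1 : tv 1 = v 1 := by
    have h0 : (0:ℕ) < q := hq
    have e1 : tv 1 = ∑ k, Mq q ⟨0, h0⟩ k • w k := by
      simp [htv, Mq_row_zero q h0]
    rw [e1, hKey ⟨0, h0⟩]
    simp [hd]
  -- integrability facts
  have hvint : ∀ j : ℕ, IntervalIntegrable (fun t => t ^ j • v t) volume 0 1 := by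
    intro j
    apply ContinuousOn.intervalIntegrable
    rw [Set.uIcc_of_le (by norm_num : (0:ℝ) ≤ 1)]
    exact ((continuous_pow j).continuousOn).smul hv
  have htvint : ∀ j : ℕ, IntervalIntegrable (fun t => t ^ j • tv t) volume 0 1 :=
    fun j => ((continuous_pow j).smul htvc).intervalIntegrable 0 1
  -- moments of tv equal moments of v
  have hmomtv : ∀ j : ℕ, j + 2 ≤ q →
      (∫ t in (0:ℝ)..1, t ^ j • tv t) = ∫ t in (0:ℝ)..1, t ^ j • v t := by
    intro j hj
    have hjq : j + 1 < q := by omega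
    have e1 : (∫ t in (0:ℝ)..1, t ^ j • tv t)
        = ∑ k : Fin q, ((j + k.val + 1 : ℕ) : ℝ)⁻¹ • w k := poly_moment q j w
    have e2 : ∑ k : Fin q, ((j + k.val + 1 : ℕ) : ℝ)⁻¹ • w k
        = ∑ k, Mq q ⟨j+1, hjq⟩ k • w k :=
      Finset.sum_congr rfl fun k _ => by rw [Mq_row_succ q j hjq k]
    rw [e1, e2, hKey ⟨j+1, hjq⟩]
    simp [hd]
  have hmom : ∀ j : ℕ, j + 2 ≤ q →
      (∫ t in (0:ℝ)..1, t ^ j • (v t - tv t)) = 0 := by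
    intro j hj
    have e1 : (∫ t in (0:ℝ)..1, t ^ j • (v t - tv t))
        = ∫ t in (0:ℝ)..1, (t ^ j • v t - t ^ j • tv t) :=
      intervalIntegral.integral_congr fun t _ => smul_sub _ _ _
    rw [e1, intervalIntegral.integral_sub (hvint j) (htvint j), hmomtv j hj, sub_self]
  refine ⟨tv, ⟨⟨w, fun t => rfl⟩, htv1, hmom⟩, ?_⟩
  -- uniqueness
  rintro y ⟨⟨w', hw'⟩, hy1, hymom⟩
  set u : Fin q → X := fun k => w' k - w k with hu
  have hyc : Continuous y := by
    have : y = fun t => ∑ k : Fin q, t ^ k.val • w' k := funext hw'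
    rw [this]
    exact continuous_finset_sum _ fun k _ => (continuous_pow k.val).smul continuous_const
  have hpoly : ∀ t : ℝ, y t - tv t = ∑ k : Fin q, t ^ k.val • u k := by
    intro t
    rw [hw' t]
    simp only [htv, hu, smul_sub, Finset.sum_sub_distrib]
  have hyint : ∀ j : ℕ, IntervalIntegrable (fun t => t ^ j • (v t - y t)) volume 0 1 := by
    intro j
    apply ContinuousOn.intervalIntegrable
    rw [Set.uIcc_of_le (by norm_num : (0:ℝ) ≤ 1)]
    exact ((continuous_pow j).continuousOn).smul (hv.sub hyc.continuousOn)
  have htvint' : ∀ j : ℕ, IntervalIntegrable (fun t => t ^ j • (v t - tv t)) volume 0 1 := by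
    intro j
    apply ContinuousOn.intervalIntegrable
    rw [Set.uIcc_of_le (by norm_num : (0:ℝ) ≤ 1)]
    exact ((continuous_pow j).continuousOn).smul (hv.sub htvc.continuousOn)
  have h0 : ∀ i : Fin q, ∑ k, Mq q i k • u k = 0 := by
    intro i
    rcases Nat.eq_zero_or_pos i.val with h | h
    · have hi : i = ⟨0, hq⟩ := Fin.ext h
      have e1 : ∑ k, Mq q i k • u k = ∑ k, u k := by
        rw [hi]
        exact Finset.sum_congr rfl fun k _ => by rw [Mq_row_zero q hq k, one_smul]
      have e2 : ∑ k : Fin q, u k = y 1 - tv 1 := by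
        rw [hpoly 1]
        exact Finset.sum_congr rfl fun k _ => by rw [one_pow, one_smul]
      rw [e1, e2, hy1, htv1, sub_self]
    · obtain ⟨j, hj⟩ : ∃ j, i.val = j + 1 := ⟨i.val - 1, by omega⟩
      have hjq : j + 1 < q := hj ▸ i.isLt
      have hj2 : j + 2 ≤ q := by omega
      have hi : i = ⟨j+1, hjq⟩ := Fin.ext hj
      have e1 : ∑ k, Mq q i k • u k = ∑ k : Fin q, ((j + k.val + 1 : ℕ) : ℝ)⁻¹ • u k := by
        rw [hi]
        exact Finset.sum_congr rfl fun k _ => by rw [Mq_row_succ q j hjq k]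
      have e2 : (∫ t in (0:ℝ)..1, t ^ j • (y t - tv t))
          = ∑ k : Fin q, ((j + k.val + 1 : ℕ) : ℝ)⁻¹ • u k := by
        have e3 : (∫ t in (0:ℝ)..1, t ^ j • (y t - tv t))
            = ∫ t in (0:ℝ)..1, t ^ j • (∑ k : Fin q, t ^ k.val • u k) :=
          intervalIntegral.integral_congr fun t _ => by rw [hpoly t]
        rw [e3]
        exact poly_moment q j u
      have e4 : (∫ t in (0:ℝ)..1, t ^ j • (y t - tv t)) = 0 := by
        have e5 : (∫ t in (0:ℝ)..1, t ^ j • (y t - tv t))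
            = ∫ t in (0:ℝ)..1,
                (t ^ j • (v t - tv t) - t ^ j • (v t - y t)) :=
          intervalIntegral.integral_congr fun t _ => by
            rw [← smul_sub]
            congr 1
            abel
        rw [e5, intervalIntegral.integral_sub (htvint' j) (hyint j),
          hmom j hj2, hymom j hj2, sub_self]
      rw [e1, ← e2, e4]
  have huz : ∀ a : Fin q, u a = 0 := by
    intro a
    have e1 : u a = ∑ k, ((N * Mq q) a k) • u k := by
      rw [hNM]
      simp [Matrix.one_apply]
    have e2 : ∑ k, ((N * Mq q) a k) • u k
        = ∑ k, (∑ i, N a i * Mq q i k) • u k :=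
      Finset.sum_congr rfl fun k _ => by rw [Matrix.mul_apply]
    have e3 : ∑ k, (∑ i, N a i * Mq q i k) • u k
        = ∑ i, N a i • (∑ k, Mq q i k • u k) := by
      calc ∑ k, (∑ i, N a i * Mq q i k) • u k
          = ∑ k, ∑ i, (N a i * Mq q i k) • u k :=
            Finset.sum_congr rfl fun k _ => Finset.sum_smul
        _ = ∑ i, ∑ k, (N a i * Mq q i k) • u k := Finset.sum_comm
        _ = ∑ i, N a i • (∑ k, Mq q i k • u k) :=
            Finset.sum_congr rfl fun i _ => by
              rw [Finset.smul_sum]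
              exact Finset.sum_congr rfl fun k _ => (smul_smul _ _ _).symm
    rw [e1, e2, e3]
    simp [h0]
  funext t
  have := hpoly t
  rw [Finset.sum_congr rfl fun k _ => by rw [huz k, smul_zero]] at this
  simp only [Finset.sum_const_zero] at this
  exact sub_eq_zero.mp this
end

section
/- Let $q \ge 1$, let $0 < c_1 < \cdots < c_q = 1$ be the Radau nodes, let the interpolant $\tilde v$ and reconstruction $\hat w$ be defined as in the paper (on a single interval $[0,1]$ for simplicity: $\tilde v$ is the degree-$(q-1)$ polynomial with $\tilde v(1) = v(1)$ and $v - \tilde v \perp \mathbb{P}_{q-2}$ in $L^2(0,1)$; $\hat w$ is the degree-$q$ polynomial with $\hat w(c_j) = w(c_j)$ for $j=1,\dots,q$ and $\hat w(0) = w_0$, a prescribed initial value). Then for every polynomial $v$ of degree at most $q$ with coefficients in a Banach space $X$, the composition with initial value $w_0 := v(0)$ reproduces $v$: $\widehat{\tilde v} = v$. -/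
open Polynomial MeasureTheory Set

theorem key19 (q : ℕ) (hq : 1 ≤ q)
    (c : Fin q → ℝ) (hmono : StrictMono c) (hpos : ∀ i, 0 < c i)
    (hlast : c ⟨q - 1, Nat.sub_lt hq Nat.one_pos⟩ = 1)
    (b : Fin q → ℝ)
    (hquad : ∀ P : Polynomial ℝ, P.natDegree ≤ 2 * q - 2 →
      ∫ t in (0:ℝ)..1, P.eval t = ∑ i, b i * P.eval (c i))
    (P S H : Polynomial ℝ)
    (hP : P.natDegree ≤ q) (hS : S.natDegree ≤ q - 1) (hH : H.natDegree ≤ q)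
    (h1 : P.eval 1 = S.eval 1)
    (horth : ∀ j : ℕ, j + 2 ≤ q → ∫ t in (0:ℝ)..1, t ^ j * (P.eval t - S.eval t) = 0)
    (hnodes : ∀ i, H.eval (c i) = S.eval (c i))
    (h0 : H.eval 0 = P.eval 0) : H = P := by
  have hcinj : Function.Injective c := hmono.injective
  have hinjOn : Set.InjOn c (Finset.univ : Finset (Fin q)) := fun a _ b' _ h => hcinj h
  set N : Polynomial ℝ := ∏ i, (X - C (c i)) with hNdef
  have hNmonic : N.Monic := monic_prod_of_monic _ _ fun i _ => monic_X_sub_C _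
  have hNdeg : N.natDegree = q := by
    rw [hNdef, natDegree_prod_of_monic _ _ fun i _ => monic_X_sub_C _]
    simp
  have hNeval : ∀ i, N.eval (c i) = 0 := by
    intro i
    rw [hNdef, eval_prod]
    exact Finset.prod_eq_zero (Finset.mem_univ i) (by simp)
  set W : Polynomial ℝ := Lagrange.interpolate Finset.univ c (fun i => P.eval (c i)) with hWdef
  have hWdeg : W.natDegree ≤ q - 1 := by
    by_cases hW0 : W = 0
    · simp [hW0]
    · have hd := Lagrange.degree_interpolate_lt (fun i => P.eval (c i)) hinjOn
      have : W.natDegree < q := by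
        rw [natDegree_lt_iff_degree_lt hW0]
        have hd' : W.degree < (Finset.univ : Finset (Fin q)).card := hd
        simpa using hd'
      omega
  have hWnode : ∀ i, W.eval (c i) = P.eval (c i) := fun i =>
    Lagrange.eval_interpolate_at_node _ hinjOn (Finset.mem_univ i)
  set E : Polynomial ℝ := P - W with hEdef
  have hEdeg : E.natDegree ≤ q := (natDegree_sub_le _ _).trans (max_le hP (hWdeg.trans (by omega)))
  set a : ℝ := E.coeff q with hadef
  have hCaN : (C a * N).natDegree ≤ q := (natDegree_C_mul_le _ _).trans hNdeg.le
  have hD : E - C a * N = 0 := by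
    apply eq_zero_of_natDegree_lt_card_of_eval_eq_zero _ hcinj
    · intro i
      simp [hEdef, hNeval i, hWnode i]
    · have hdd : (E - C a * N).natDegree ≤ q - 1 := by
        rw [natDegree_le_iff_coeff_eq_zero]
        intro m hm
        have hmq : q ≤ m := by omega
        rcases eq_or_lt_of_le hmq with h | h
        · have hN1 : N.coeff q = 1 := by rw [← hNdeg]; exact hNmonic.coeff_natDegree
          rw [coeff_sub, coeff_C_mul, ← h, hN1, mul_one, hadef, sub_self]
        · rw [coeff_sub, coeff_eq_zero_of_natDegree_lt (lt_of_le_of_lt hEdeg h),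
            coeff_eq_zero_of_natDegree_lt (lt_of_le_of_lt hCaN h), sub_self]
      simpa using lt_of_le_of_lt hdd (by omega : q - 1 < q)
  have hE : E = C a * N := sub_eq_zero.mp hD
  have hIntP : ∀ p : Polynomial ℝ, IntervalIntegrable (fun t => p.eval t) volume 0 1 :=
    fun p => p.continuous.intervalIntegrable _ _
  have horthE : ∀ j : ℕ, j + 2 ≤ q → (∫ t in (0:ℝ)..1, t ^ j * E.eval t) = 0 := by
    intro j hj
    have hdeg : (X ^ j * N).natDegree ≤ 2 * q - 2 := by
      refine (natDegree_mul_le).trans ?_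
      rw [natDegree_X_pow, hNdeg]; omega
    have hquadN := hquad (X ^ j * N) hdeg
    have heq : ∀ t : ℝ, t ^ j * E.eval t = a * (X ^ j * N : Polynomial ℝ).eval t := by
      intro t; rw [hE]; simp; ring
    calc (∫ t in (0:ℝ)..1, t ^ j * E.eval t)
        = ∫ t in (0:ℝ)..1, a * (X ^ j * N : Polynomial ℝ).eval t := by
          simp_rw [heq]
      _ = a * ∫ t in (0:ℝ)..1, (X ^ j * N : Polynomial ℝ).eval t :=
          intervalIntegral.integral_const_mul _ _
      _ = a * ∑ i, b i * (X ^ j * N : Polynomial ℝ).eval (c i) := by rw [hquadN]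
      _ = 0 := by simp [hNeval]
  set G : Polynomial ℝ := W - S with hGdef
  have hGdeg : G.natDegree ≤ q - 1 := (natDegree_sub_le _ _).trans (max_le hWdeg hS)
  have hG1 : G.eval 1 = 0 := by
    have h1node : W.eval 1 = P.eval 1 := by
      rw [← hlast]; exact hWnode _
    simp [hGdef, h1node, h1]
  have horthG : ∀ j : ℕ, j + 2 ≤ q → (∫ t in (0:ℝ)..1, t ^ j * G.eval t) = 0 := by
    intro j hj
    have heq : ∀ t : ℝ, t ^ j * G.eval t = t ^ j * (P.eval t - S.eval t) - t ^ j * E.eval t := by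
      intro t; simp [hGdef, hEdef]; ring
    have hi1 : IntervalIntegrable (fun t => t ^ j * (P.eval t - S.eval t)) volume 0 1 := by
      have : (fun t : ℝ => t ^ j * (P.eval t - S.eval t)) =
          fun t => (X ^ j * (P - S) : Polynomial ℝ).eval t := by
        funext t; simp
      rw [this]; exact hIntP _
    have hi2 : IntervalIntegrable (fun t => t ^ j * E.eval t) volume 0 1 := by
      have : (fun t : ℝ => t ^ j * E.eval t) =
          fun t => (X ^ j * E : Polynomial ℝ).eval t := by
        funext t; simp
      rw [this]; exact hIntP _
    simp_rw [heq]
    rw [intervalIntegral.integral_sub hi1 hi2, horth j hj, horthE j hj, sub_zero]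
  obtain ⟨R, hR⟩ : (X - C (1:ℝ)) ∣ G := dvd_iff_isRoot.mpr hG1
  have hGzero : G = 0 := by
    by_contra hG0
    have hRne : R ≠ 0 := by rintro rfl; simp at hR; exact hG0 hR
    have hRdeg : R.natDegree ≤ q - 2 ∧ 2 ≤ q := by
      have : G.natDegree = 1 + R.natDegree := by
        rw [hR, natDegree_mul (X_sub_C_ne_zero 1) hRne, natDegree_X_sub_C]
      constructor <;> omega
    -- ∫ (t-1) R(t)^2 = 0
    have hIRG : (∫ t in (0:ℝ)..1, R.eval t * G.eval t) = 0 := by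
      have hev : ∀ t : ℝ, R.eval t * G.eval t =
          ∑ j ∈ Finset.range (q - 1), R.coeff j * (t ^ j * G.eval t) := by
        intro t
        rw [eval_eq_sum_range' (lt_of_le_of_lt hRdeg.1 (by omega : q - 2 < q - 1)) t,
          Finset.sum_mul]
        exact Finset.sum_congr rfl fun j _ => by ring
      simp_rw [hev]
      rw [intervalIntegral.integral_finset_sum]
      · refine Finset.sum_eq_zero fun j hj => ?_
        rw [intervalIntegral.integral_const_mul, horthG j (by
          have := Finset.mem_range.mp hj; omega), mul_zero]
      · intro j hj
        have : (fun t : ℝ => R.coeff j * (t ^ j * G.eval t)) =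
            fun t => (C (R.coeff j) * (X ^ j * G) : Polynomial ℝ).eval t := by
          funext t; simp
        rw [this]; exact hIntP _
    set F : Polynomial ℝ := (1 - X) * R ^ 2 with hFdef
    have hFne : F ≠ 0 := by
      apply mul_ne_zero _ (pow_ne_zero _ hRne)
      rw [show (1 - X : Polynomial ℝ) = -(X - C 1) by rw [C_1, neg_sub]]
      exact neg_ne_zero.mpr (X_sub_C_ne_zero 1)
    have hFint : (∫ t in (0:ℝ)..1, F.eval t) = 0 := by
      have : ∀ t : ℝ, F.eval t = -(R.eval t * G.eval t) := by
        intro t; rw [hFdef, hR]; simp; ring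
      simp_rw [this]
      rw [intervalIntegral.integral_neg, hIRG, neg_zero]
    have hFset : (∫ t in Set.Ioc (0:ℝ) 1, F.eval t) = 0 := by
      rw [← intervalIntegral.integral_of_le (by norm_num : (0:ℝ) ≤ 1), hFint]
    have hnn : 0 ≤ᵐ[volume.restrict (Set.Ioc (0:ℝ) 1)] fun t => F.eval t := by
      refine ae_restrict_of_forall_mem measurableSet_Ioc fun x hx => ?_
      have : (0:ℝ) ≤ 1 - x := by linarith [hx.2]
      simp only [hFdef, eval_mul, eval_sub, eval_one, eval_X, eval_pow]
      positivity
    have hFae : (fun t => F.eval t) =ᵐ[volume.restrict (Set.Ioc (0:ℝ) 1)] 0 :=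
      (integral_eq_zero_iff_of_nonneg_ae hnn
        (F.continuous.integrableOn_Ioc)).mp hFset
    have hnull : volume ({x | F.eval x ≠ 0} ∩ Set.Ioc (0:ℝ) 1) = 0 := by
      have := hFae
      rw [Filter.EventuallyEq, ae_restrict_iff' measurableSet_Ioc] at this
      rw [ae_iff] at this
      refine measure_mono_null ?_ this
      intro x hx
      simp only [Set.mem_setOf_eq, Set.mem_inter_iff] at hx ⊢
      exact fun hmem => hx.1 (hmem hx.2)
    have hsub : Set.Ioc (0:ℝ) 1 ⊆ {x | F.IsRoot x} ∪ ({x | F.eval x ≠ 0} ∩ Set.Ioc (0:ℝ) 1) := by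
      intro x hx
      by_cases h : F.eval x = 0
      · exact Or.inl h
      · exact Or.inr ⟨h, hx⟩
    have : volume (Set.Ioc (0:ℝ) 1) = 0 := by
      refine measure_mono_null hsub ?_
      refine measure_union_null ?_ hnull
      exact (finite_setOf_isRoot hFne).measure_zero _
    simp at this
  have hWS : W = S := sub_eq_zero.mp hGzero
  have hHPnodes : ∀ i, (H - P).eval (c i) = 0 := by
    intro i
    rw [eval_sub, hnodes i, ← hWS, hWnode i, sub_self]
  have final : H - P = 0 := by
    apply eq_zero_of_natDegree_lt_card_of_eval_eq_zero (H - P)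
        (f := (Fin.cases 0 c : Fin (q + 1) → ℝ))
    · intro i j h
      induction i using Fin.cases with
      | zero =>
        induction j using Fin.cases with
        | zero => rfl
        | succ j => simp only [Fin.cases_zero, Fin.cases_succ] at h
                    exact absurd h.symm (ne_of_gt (hpos j))
      | succ i =>
        induction j using Fin.cases with
        | zero => simp only [Fin.cases_zero, Fin.cases_succ] at h
                  exact absurd h (ne_of_gt (hpos i))
        | succ j => simp only [Fin.cases_succ] at h
                    exact congrArg Fin.succ (hcinj h)
    · intro i
      induction i using Fin.cases with
      | zero => simpa using sub_eq_zero.mpr h0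
      | succ i => simpa using hHPnodes i
    · have : (H - P).natDegree ≤ q := (natDegree_sub_le _ _).trans (max_le hH hP)
      simpa using lt_of_le_of_lt this (by omega : q < q + 1)
  exact sub_eq_zero.mp final

theorem stmt19 (q : ℕ) (hq : 1 ≤ q)
    {X : Type*} [NormedAddCommGroup X] [NormedSpace ℝ X] [CompleteSpace X]
    (c : Fin q → ℝ) (hmono : StrictMono c) (hpos : ∀ i, 0 < c i)
    (hlast : c ⟨q - 1, by omega⟩ = 1)
    (b : Fin q → ℝ)
    (hquad : ∀ P : Polynomial ℝ, P.natDegree ≤ 2 * q - 2 →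
      ∫ t in (0:ℝ)..1, P.eval t = ∑ i, b i * P.eval (c i))
    (v : ℝ → X) (av : Fin (q + 1) → X) (hv : ∀ t, v t = ∑ j, t ^ j.val • av j)
    (tv : ℝ → X)
    (htvpoly : ∃ a : Fin q → X, ∀ t, tv t = ∑ j, t ^ j.val • a j)
    (htv1 : tv 1 = v 1)
    (horth : ∀ j : ℕ, j + 2 ≤ q → ∫ t in (0:ℝ)..1, t ^ j • (v t - tv t) = 0)
    (hatv : ℝ → X)
    (hhatpoly : ∃ a : Fin (q + 1) → X, ∀ t, hatv t = ∑ j, t ^ j.val • a j)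
    (hhatnodes : ∀ i, hatv (c i) = tv (c i))
    (hhat0 : hatv 0 = v 0) :
    hatv = v := by
  obtain ⟨atv, htv⟩ := htvpoly
  obtain ⟨ah, hhat⟩ := hhatpoly
  have hcontv : Continuous v := by
    rw [funext hv]
    exact continuous_finset_sum _ fun j _ => (continuous_pow _).smul continuous_const
  have hconttv : Continuous tv := by
    rw [funext htv]
    exact continuous_finset_sum _ fun j _ => (continuous_pow _).smul continuous_const
  funext t
  have hsub : hatv t - v t = 0 := by
    apply NormedSpace.eq_zero_of_forall_dual_eq_zero ℝ
    intro φ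
    set P : Polynomial ℝ := ∑ j : Fin (q + 1), C (φ (av j)) * Polynomial.X ^ (j : ℕ) with hPdef
    set S : Polynomial ℝ := ∑ j : Fin q, C (φ (atv j)) * Polynomial.X ^ (j : ℕ) with hSdef
    set Hp : Polynomial ℝ := ∑ j : Fin (q + 1), C (φ (ah j)) * Polynomial.X ^ (j : ℕ) with hHdef
    have hPe : ∀ s, P.eval s = φ (v s) := by
      intro s
      rw [hv s, map_sum, hPdef, eval_finset_sum]
      refine Finset.sum_congr rfl fun j _ => ?_
      rw [eval_mul, eval_C, eval_pow, eval_X, _root_.map_smul, smul_eq_mul, mul_comm]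
    have hSe : ∀ s, S.eval s = φ (tv s) := by
      intro s
      rw [htv s, map_sum, hSdef, eval_finset_sum]
      refine Finset.sum_congr rfl fun j _ => ?_
      rw [eval_mul, eval_C, eval_pow, eval_X, _root_.map_smul, smul_eq_mul, mul_comm]
    have hHe : ∀ s, Hp.eval s = φ (hatv s) := by
      intro s
      rw [hhat s, map_sum, hHdef, eval_finset_sum]
      refine Finset.sum_congr rfl fun j _ => ?_
      rw [eval_mul, eval_C, eval_pow, eval_X, _root_.map_smul, smul_eq_mul, mul_comm]
    have hPd : P.natDegree ≤ q := natDegree_sum_le_of_forall_le _ _ fun j _ => by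
      refine (natDegree_C_mul_le _ _).trans ?_
      rw [natDegree_X_pow]
      exact Nat.lt_succ_iff.mp j.isLt
    have hSd : S.natDegree ≤ q - 1 := natDegree_sum_le_of_forall_le _ _ fun j _ => by
      refine (natDegree_C_mul_le _ _).trans ?_
      rw [natDegree_X_pow]
      have := j.isLt; omega
    have hHd : Hp.natDegree ≤ q := natDegree_sum_le_of_forall_le _ _ fun j _ => by
      refine (natDegree_C_mul_le _ _).trans ?_
      rw [natDegree_X_pow]
      exact Nat.lt_succ_iff.mp j.isLt
    have h1 : P.eval 1 = S.eval 1 := by rw [hPe, hSe, htv1]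
    have horthP : ∀ j : ℕ, j + 2 ≤ q →
        (∫ s in (0:ℝ)..1, s ^ j * (P.eval s - S.eval s)) = 0 := by
      intro j hj
      have hInt : IntervalIntegrable (fun s => s ^ j • (v s - tv s)) volume 0 1 :=
        ((continuous_pow j).smul (hcontv.sub hconttv)).intervalIntegrable _ _
      have hcomm := φ.intervalIntegral_comp_comm hInt
      have heq : ∀ s : ℝ, s ^ j * (P.eval s - S.eval s) = φ (s ^ j • (v s - tv s)) := by
        intro s; rw [_root_.map_smul, map_sub, hPe, hSe]; simp [smul_eq_mul]
      simp_rw [heq]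
      rw [hcomm, horth j hj, map_zero]
    have hnodes' : ∀ i, Hp.eval (c i) = S.eval (c i) := by
      intro i; rw [hHe, hSe, hhatnodes i]
    have h0' : Hp.eval 0 = P.eval 0 := by rw [hHe, hPe, hhat0]
    have hHP : Hp = P :=
      key19 q hq c hmono hpos hlast b hquad P S Hp hPd hSd hHd h1 horthP hnodes' h0'
    show φ (hatv t - v t) = 0
    rw [map_sub, ← hHe, ← hPe, hHP, sub_self]
  exact sub_eq_zero.mp hsub
end
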